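/- arXiv:2011.11258 — 3 statements merged into one kernel-verified Lean document; each statement's English description precedes it below -/
import Mathlib

section
/- The function g_λ(x) = ∑_{l ∈ ℤ^m} cos(2π l·x)/(1 + λ‖l‖_{2k}^{2k}) is the unique solution in C^0(𝕋^m) ∩ H^k(𝕋^m) of the weak equation −φ(0) + λ∫_{𝕋^m} ∇^k φ · ∇^k g + ∫_{𝕋^m} φ g = 0 for all smooth test functions φ on 𝕋^m. -/
/-- The weight `‖l‖_{2k}^{2k} = ∑_{j=1}^m l_j^{2k}` appearing as the Fourier
multiplier of the `k`-gradient pairing `∫ ∇^k φ · ∇^k g` (with the paper's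
normalization of `∇^k` on `𝕋^m`). -/
noncomputable def pw (m k : ℕ) (l : Fin m → ℤ) : ℝ := ∑ j, ((l j : ℝ)) ^ (2 * k)

/-- Membership in `C^0(𝕋^m) ∩ H^k(𝕋^m)` for a conjugate-symmetric (real-valued)
Fourier coefficient sequence. -/
def AdmP (m k : ℕ) (c : (Fin m → ℤ) → ℂ) : Prop :=
  (∀ l, c (-l) = (starRingEnd ℂ) (c l)) ∧
  Summable (fun l : Fin m → ℤ => (1 + pw m k l) * ‖c l‖ ^ 2)

/-- The weak Euler–Lagrange equation
`−φ(0) + λ ∫_{𝕋^m} ∇^k φ · ∇^k g + ∫_{𝕋^m} φ g = 0` for all smooth test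
functions `φ` on `𝕋^m`, written via Parseval through Fourier coefficients:
smooth real test functions correspond to finitely supported conjugate-symmetric
coefficient sequences `d`, `φ(0) = ∑_l d_l`, `∫ φ g = ∑_l d_l * conj(ĝ_l)` and
`∫ ∇^k φ · ∇^k g = ∑_l ‖l‖_{2k}^{2k} d_l * conj(ĝ_l)`. -/
def WeakEL (m k : ℕ) (lam : ℝ) (c : (Fin m → ℤ) → ℂ) : Prop :=
  ∀ d : (Fin m → ℤ) → ℂ, (Function.support d).Finite →
    (∀ l, d (-l) = (starRingEnd ℂ) (d l)) →
    -(∑' l : Fin m → ℤ, d l)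
      + (lam : ℂ) * ∑' l : Fin m → ℤ, (pw m k l : ℂ) * (d l * (starRingEnd ℂ) (c l))
      + ∑' l : Fin m → ℤ, d l * (starRingEnd ℂ) (c l) = 0

lemma pw_nonneg (m k : ℕ) (l : Fin m → ℤ) : 0 ≤ pw m k l :=
  Finset.sum_nonneg fun _ _ => (even_two_mul k).pow_nonneg _

lemma pw_neg (m k : ℕ) (l : Fin m → ℤ) : pw m k (-l) = pw m k l := by
  unfold pw
  refine Finset.sum_congr rfl fun j _ => ?_
  simp only [Pi.neg_apply, Int.cast_neg]
  rw [Even.neg_pow ⟨k, by ring⟩]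

lemma sumZ {b : ℝ} (hb : 1 < b) : Summable (fun n : ℤ => (1 + |(n : ℝ)|) ^ (-b)) := by
  have hnat : Summable (fun n : ℕ => (1 + (n : ℝ)) ^ (-b)) := by
    have h : Summable (fun n : ℕ => (n : ℝ) ^ (-b)) :=
      Real.summable_nat_rpow.2 (by linarith)
    have h2 := h.comp_injective (add_right_injective 1)
    exact h2.congr fun n => by push_cast [Function.comp]; ring_nf
  apply Summable.of_nat_of_neg
  · exact hnat.congr fun n => by
      push_cast [abs_of_nonneg (by positivity : (0:ℝ) ≤ (n:ℝ))]; ring_nf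
  · exact hnat.congr fun n => by
      push_cast [abs_neg, abs_of_nonneg (by positivity : (0:ℝ) ≤ (n:ℝ))]; ring_nf

lemma sumPi {b : ℝ} (hb : 1 < b) :
    ∀ n : ℕ, Summable (fun l : Fin n → ℤ => ∏ j, (1 + |(l j : ℝ)|) ^ (-b))
  | 0 => by
      simpa using (summable_of_finite_support (Set.toFinite _) :
        Summable (fun _ : Fin 0 → ℤ => (1 : ℝ)))
  | (n + 1) => by
      have hmul := (sumZ hb).mul_of_nonneg (sumPi hb n)
        (fun x => Real.rpow_nonneg (by positivity) _)
        (fun x => Finset.prod_nonneg fun j _ => Real.rpow_nonneg (by positivity) _)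
      rw [← (Fin.consEquiv (fun _ : Fin (n+1) => ℤ)).summable_iff]
      apply hmul.congr
      rintro ⟨a, v⟩
      simp [Function.comp, Fin.prod_univ_succ]

lemma pw_term_le (m k : ℕ) (l : Fin m → ℤ) (j : Fin m) : ((l j : ℝ)) ^ (2 * k) ≤ pw m k l := by
  unfold pw
  exact Finset.single_le_sum (f := fun i => ((l i : ℝ)) ^ (2 * k))
    (fun i _ => (even_two_mul k).pow_nonneg _) (Finset.mem_univ j)

lemma factor_le (m k : ℕ) (l : Fin m → ℤ) (j : Fin m) :
    (1 + |(l j : ℝ)|) ^ (2 * k) ≤ 2 ^ (2 * k) * (1 + pw m k l) := by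
  have h1 : (1 + |(l j : ℝ)|) ≤ 2 * max 1 |(l j : ℝ)| := by
    rcases le_total |(l j : ℝ)| 1 with h | h
    · rw [max_eq_left h]; linarith
    · rw [max_eq_right h]; linarith [abs_nonneg ((l j : ℝ))]
  calc (1 + |(l j : ℝ)|) ^ (2 * k) ≤ (2 * max 1 |(l j : ℝ)|) ^ (2 * k) :=
        pow_le_pow_left₀ (by positivity) h1 _
    _ = 2 ^ (2 * k) * (max 1 |(l j : ℝ)|) ^ (2 * k) := by rw [mul_pow]
    _ ≤ 2 ^ (2 * k) * (1 + pw m k l) := by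
        gcongr
        rcases le_total |(l j : ℝ)| 1 with h | h
        · rw [max_eq_left h, one_pow]; have := pw_nonneg m k l; linarith
        · rw [max_eq_right h]
          have habs : |(l j : ℝ)| ^ (2 * k) = ((l j : ℝ)) ^ (2 * k) := by
            rw [← abs_pow, abs_of_nonneg ((even_two_mul k).pow_nonneg _)]
          rw [habs]; linarith [pw_term_le m k l j]

lemma inv_le_prod (m k : ℕ) (hm : 0 < m) (l : Fin m → ℤ) :
    (1 + pw m k l)⁻¹ ≤ 2 ^ (2 * k) * ∏ j, (1 + |(l j : ℝ)|) ^ (-(2 * (k : ℝ) / m)) := by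
  have hpw := pw_nonneg m k l
  set b : ℝ := 2 * (k : ℝ) / m with hbdef
  have hxpos : ∀ j : Fin m, (0 : ℝ) < 1 + |(l j : ℝ)| := fun j => by positivity
  have hP : (0 : ℝ) < ∏ j, (1 + |(l j : ℝ)|) ^ b :=
    Finset.prod_pos fun j _ => Real.rpow_pos_of_pos (hxpos j) _
  have hm' : (m : ℝ) ≠ 0 := Nat.cast_ne_zero.2 hm.ne'
  have hbm : b * m = ((2 * k : ℕ) : ℝ) := by
    rw [hbdef, div_mul_cancel₀ _ hm']; push_cast; ring
  have hkey : (∏ j, (1 + |(l j : ℝ)|) ^ b) ≤ 2 ^ (2 * k) * (1 + pw m k l) := by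
    have hpow : (∏ j, (1 + |(l j : ℝ)|) ^ b) ^ m ≤ (2 ^ (2 * k) * (1 + pw m k l)) ^ m := by
      rw [← Finset.prod_pow]
      calc ∏ j, ((1 + |(l j : ℝ)|) ^ b) ^ m = ∏ j, (1 + |(l j : ℝ)|) ^ (2 * k) := by
            refine Finset.prod_congr rfl fun j _ => ?_
            rw [← Real.rpow_natCast ((1 + |(l j : ℝ)|) ^ b) m, ← Real.rpow_mul (hxpos j).le,
              hbm, Real.rpow_natCast]
        _ ≤ ∏ _j : Fin m, (2 ^ (2 * k) * (1 + pw m k l)) :=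
            Finset.prod_le_prod (fun j _ => by positivity) (fun j _ => factor_le m k l j)
        _ = (2 ^ (2 * k) * (1 + pw m k l)) ^ m := by
            rw [Finset.prod_const, Finset.card_univ, Fintype.card_fin]
    exact (pow_le_pow_iff_left₀ hP.le (by positivity) hm.ne').mp hpow
  have h2 : ∏ j, (1 + |(l j : ℝ)|) ^ (-b) = (∏ j, (1 + |(l j : ℝ)|) ^ b)⁻¹ := by
    rw [← Finset.prod_inv_distrib]
    exact Finset.prod_congr rfl fun j _ => (Real.rpow_neg (hxpos j).le _)
  rw [h2, show (2 : ℝ) ^ (2 * k) * (∏ j, (1 + |(l j : ℝ)|) ^ b)⁻¹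
      = ((∏ j, (1 + |(l j : ℝ)|) ^ b) / 2 ^ (2 * k))⁻¹ by rw [inv_div, div_eq_mul_inv]]
  exact inv_anti₀ (by positivity) (by rw [div_le_iff₀ (by positivity)]; linarith [hkey])

lemma tsum_pair {α : Type*} [DecidableEq α] {f : α → ℂ} {a b : α} (hab : a ≠ b)
    (hf : ∀ l, l ≠ a → l ≠ b → f l = 0) : ∑' l, f l = f a + f b := by
  rw [tsum_eq_sum (s := {a, b}) (fun l hl => by
    simp only [Finset.mem_insert, Finset.mem_singleton, not_or] at hl
    exact hf l hl.1 hl.2)]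
  exact Finset.sum_pair hab


/-- The function `g_λ(x) = ∑_{l ∈ ℤ^m} cos(2π l·x)/(1 + λ‖l‖_{2k}^{2k})`, i.e. the
coefficient sequence `ĝ_l = 1/(1 + λ‖l‖_{2k}^{2k})`, is the unique solution in
`C^0(𝕋^m) ∩ H^k(𝕋^m)` of the weak equation
`−φ(0) + λ∫ ∇^k φ·∇^k g + ∫ φ g = 0` for all smooth test functions `φ`. -/
theorem stmt_6 (m k : ℕ) (hm : 0 < m) (hk : 0 < k) (hkm : (m : ℝ) / 2 < (k : ℝ))
    (lam : ℝ) (hlam : 0 < lam) :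
    AdmP m k (fun l => ((1 + lam * pw m k l : ℝ) : ℂ)⁻¹) ∧
    WeakEL m k lam (fun l => ((1 + lam * pw m k l : ℝ) : ℂ)⁻¹) ∧
    ∀ c : (Fin m → ℤ) → ℂ, AdmP m k c → WeakEL m k lam c →
      c = fun l => ((1 + lam * pw m k l : ℝ) : ℂ)⁻¹ := by
  classical
  have hpos : ∀ l, (0 : ℝ) < 1 + lam * pw m k l := fun l => by
    have := pw_nonneg m k l; nlinarith
  have hne : ∀ l, ((1 + lam * pw m k l : ℝ) : ℂ) ≠ 0 :=
    fun l => Complex.ofReal_ne_zero.2 (hpos l).ne'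
  have hconj : ∀ l, (starRingEnd ℂ) (((1 + lam * pw m k l : ℝ) : ℂ)⁻¹)
      = ((1 + lam * pw m k l : ℝ) : ℂ)⁻¹ := fun l => by
    rw [← Complex.ofReal_inv, Complex.conj_ofReal]
  have hsym : ∀ l, ((1 + lam * pw m k (-l) : ℝ) : ℂ)⁻¹
      = (starRingEnd ℂ) (((1 + lam * pw m k l : ℝ) : ℂ)⁻¹) := fun l => by
    rw [hconj, pw_neg]
  refine ⟨⟨hsym, ?_⟩, ?_, ?_⟩
  · -- Summability
    have hb : (1 : ℝ) < 2 * (k : ℝ) / m := by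
      rw [lt_div_iff₀ (by exact_mod_cast hm : (0:ℝ) < (m:ℝ))]; linarith
    have hmin : (0 : ℝ) < min 1 lam := lt_min one_pos hlam
    set M : ℝ := (min 1 lam)⁻¹ with hM
    refine Summable.of_nonneg_of_le
      (fun l => mul_nonneg (by have := pw_nonneg m k l; linarith) (by positivity)) (fun l => ?_)
      (((sumPi hb m).mul_left (M ^ 2 * 2 ^ (2 * k))))
    have hpw := pw_nonneg m k l
    have h1 : ‖((1 + lam * pw m k l : ℝ) : ℂ)⁻¹‖ = (1 + lam * pw m k l)⁻¹ := by
      rw [norm_inv, Complex.norm_real, Real.norm_eq_abs, abs_of_pos (hpos l)]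
    have h2 : (1 + lam * pw m k l)⁻¹ ≤ M * (1 + pw m k l)⁻¹ := by
      rw [hM, ← mul_inv]
      refine inv_anti₀ (by positivity) ?_
      have hm1 : min 1 lam ≤ 1 := min_le_left _ _
      have hm2 : min 1 lam ≤ lam := min_le_right _ _
      nlinarith
    calc (1 + pw m k l) * ‖((1 + lam * pw m k l : ℝ) : ℂ)⁻¹‖ ^ 2
        = (1 + pw m k l) * ((1 + lam * pw m k l)⁻¹) ^ 2 := by rw [h1]
      _ ≤ (1 + pw m k l) * (M * (1 + pw m k l)⁻¹) ^ 2 := by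
          have := (hpos l)
          gcongr
      _ = M ^ 2 * (1 + pw m k l)⁻¹ := by
          field_simp
      _ ≤ M ^ 2 * (2 ^ (2 * k) * ∏ j, (1 + |(l j : ℝ)|) ^ (-(2 * (k : ℝ) / m))) := by
          have := inv_le_prod m k hm l
          have hM0 : 0 ≤ M ^ 2 := sq_nonneg M
          nlinarith [inv_le_prod m k hm l]
      _ = M ^ 2 * 2 ^ (2 * k) * ∏ j, (1 + |(l j : ℝ)|) ^ (-(2 * (k : ℝ) / m)) := by ring
  · -- WeakEL for g
    intro d hd hdsym
    have hts : ∀ (f : (Fin m → ℤ) → ℂ), (∀ l, d l = 0 → f l = 0) →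
        ∑' l, f l = ∑ l ∈ hd.toFinset, f l := fun f hf =>
      tsum_eq_sum (fun l hl => hf l (Function.notMem_support.mp (by
        simpa [Set.Finite.mem_toFinset] using hl)))
    rw [hts _ (fun l h => h),
      hts _ (fun l h => by rw [h]; ring),
      hts _ (fun l h => by rw [h]; ring),
      Finset.mul_sum, ← Finset.sum_neg_distrib, ← Finset.sum_add_distrib,
      ← Finset.sum_add_distrib]
    refine Finset.sum_eq_zero fun l _ => ?_
    rw [hconj l]
    have h0 := hne l
    push_cast at h0 ⊢
    field_simp
    ring
  · -- uniqueness
    intro c hc hw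
    have hcsym := hc.1
    funext l₀
    show c l₀ = ((1 + lam * pw m k l₀ : ℝ) : ℂ)⁻¹
    by_cases h0 : l₀ = -l₀
    · set d : (Fin m → ℤ) → ℂ := fun l => if l = l₀ then 1 else 0 with hdd
      have hdfin : (Function.support d).Finite :=
        (Set.finite_singleton l₀).subset (fun l hl => by
          simp only [Function.mem_support, hdd] at hl
          rcases eq_or_ne l l₀ with h | h
          · simpa using h
          · simp [h] at hl)
      have hdsym : ∀ l, d (-l) = (starRingEnd ℂ) (d l) := fun l => by
        by_cases hl : l = l₀
        · subst hl; rw [← h0]; simp [hdd]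
        · have h2 : -l ≠ l₀ := fun hcon => hl (by rw [h0, ← hcon, neg_neg])
          simp [hdd, hl, h2]
      have heq := hw d hdfin hdsym
      have e1 : ∑' l, d l = 1 := by
        rw [tsum_eq_single l₀ (fun l hl => by simp [hdd, hl])]; simp [hdd]
      have e2 : ∑' l, (pw m k l : ℂ) * (d l * (starRingEnd ℂ) (c l))
          = (pw m k l₀ : ℂ) * (starRingEnd ℂ) (c l₀) := by
        rw [tsum_eq_single l₀ (fun l hl => by simp [hdd, hl])]; simp [hdd]
      have e3 : ∑' l, d l * (starRingEnd ℂ) (c l) = (starRingEnd ℂ) (c l₀) := by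
        rw [tsum_eq_single l₀ (fun l hl => by simp [hdd, hl])]; simp [hdd]
      rw [e1, e2, e3] at heq
      have hcc : (starRingEnd ℂ) (c l₀) = c l₀ := by
        have h := hcsym l₀; rw [← h0] at h; rw [← h]
      rw [hcc] at heq
      have hmul : c l₀ * ((1 + lam * pw m k l₀ : ℝ) : ℂ) = 1 := by
        push_cast
        linear_combination heq
      exact eq_inv_of_mul_eq_one_left hmul
    · have hne0 : -l₀ ≠ l₀ := fun h => h0 h.symm
      -- real test function
      set d1 : (Fin m → ℤ) → ℂ := fun l => if l = l₀ then 1 else if l = -l₀ then 1 else 0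
        with hd1
      have hd1fin : (Function.support d1).Finite :=
        ((Set.finite_singleton (-l₀)).insert l₀).subset (fun l hl => by
          simp only [Function.mem_support, hd1] at hl
          rcases eq_or_ne l l₀ with h | h
          · simp [h]
          · rcases eq_or_ne l (-l₀) with h2 | h2
            · simp [h2]
            · simp [h, h2] at hl)
      have hd1sym : ∀ l, d1 (-l) = (starRingEnd ℂ) (d1 l) := fun l => by
        by_cases hl : l = l₀
        · subst hl
          simp [hd1, hne0, h0, Ne.symm h0]
        · by_cases hl2 : l = -l₀
          · subst hl2; simp [hd1, hne0]
          · have ha : -l ≠ l₀ := fun h => hl2 (by rw [← neg_neg l, h])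
            have hb2 : -l ≠ -l₀ := fun h => hl (neg_injective h)
            simp [hd1, hl, hl2, ha, hb2]
      have heq1 := hw d1 hd1fin hd1sym
      have e1 : ∑' l, d1 l = 2 := by
        rw [tsum_pair h0 (fun l hl1 hl2 => by simp [hd1, hl1, hl2])]
        simp [hd1, hne0, Ne.symm h0]
        norm_num
      have e2 : ∑' l, (pw m k l : ℂ) * (d1 l * (starRingEnd ℂ) (c l))
          = (pw m k l₀ : ℂ) * ((starRingEnd ℂ) (c l₀) + c l₀) := by
        rw [tsum_pair h0 (fun l hl1 hl2 => by simp [hd1, hl1, hl2])]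
        rw [show (starRingEnd ℂ) (c (-l₀)) = c l₀ by rw [hcsym l₀, Complex.conj_conj]]
        simp [hd1, hne0, Ne.symm h0, pw_neg]
        ring
      have e3 : ∑' l, d1 l * (starRingEnd ℂ) (c l) = (starRingEnd ℂ) (c l₀) + c l₀ := by
        rw [tsum_pair h0 (fun l hl1 hl2 => by simp [hd1, hl1, hl2])]
        rw [show (starRingEnd ℂ) (c (-l₀)) = c l₀ by rw [hcsym l₀, Complex.conj_conj]]
        simp [hd1, hne0, Ne.symm h0]
      rw [e1, e2, e3] at heq1
      -- imaginary test function
      set d2 : (Fin m → ℤ) → ℂ := fun l => if l = l₀ then Complex.I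
        else if l = -l₀ then -Complex.I else 0 with hd2
      have hd2fin : (Function.support d2).Finite :=
        ((Set.finite_singleton (-l₀)).insert l₀).subset (fun l hl => by
          simp only [Function.mem_support, hd2] at hl
          rcases eq_or_ne l l₀ with h | h
          · simp [h]
          · rcases eq_or_ne l (-l₀) with h2 | h2
            · simp [h2]
            · simp [h, h2] at hl)
      have hd2sym : ∀ l, d2 (-l) = (starRingEnd ℂ) (d2 l) := fun l => by
        by_cases hl : l = l₀
        · subst hl
          simp [hd2, hne0, h0, Ne.symm h0, Complex.conj_I]
        · by_cases hl2 : l = -l₀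
          · subst hl2; simp [hd2, hne0, Complex.conj_neg_I]
          · have ha : -l ≠ l₀ := fun h => hl2 (by rw [← neg_neg l, h])
            have hb2 : -l ≠ -l₀ := fun h => hl (neg_injective h)
            simp [hd2, hl, hl2, ha, hb2]
      have heq2 := hw d2 hd2fin hd2sym
      have f1 : ∑' l, d2 l = 0 := by
        rw [tsum_pair h0 (fun l hl1 hl2 => by simp [hd2, hl1, hl2])]
        simp [hd2, hne0, Ne.symm h0]
      have f2 : ∑' l, (pw m k l : ℂ) * (d2 l * (starRingEnd ℂ) (c l))
          = (pw m k l₀ : ℂ) * (Complex.I * ((starRingEnd ℂ) (c l₀) - c l₀)) := by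
        rw [tsum_pair h0 (fun l hl1 hl2 => by simp [hd2, hl1, hl2])]
        rw [show (starRingEnd ℂ) (c (-l₀)) = c l₀ by rw [hcsym l₀, Complex.conj_conj]]
        simp [hd2, hne0, Ne.symm h0, pw_neg]
        ring
      have f3 : ∑' l, d2 l * (starRingEnd ℂ) (c l)
          = Complex.I * ((starRingEnd ℂ) (c l₀) - c l₀) := by
        rw [tsum_pair h0 (fun l hl1 hl2 => by simp [hd2, hl1, hl2])]
        rw [show (starRingEnd ℂ) (c (-l₀)) = c l₀ by rw [hcsym l₀, Complex.conj_conj]]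
        simp [hd2, hne0, Ne.symm h0]
        ring
      rw [f1, f2, f3] at heq2
      -- deduce conj (c l₀) = c l₀
      have hX := hne l₀
      have hzero : ((1 + lam * pw m k l₀ : ℝ) : ℂ) * (Complex.I
          * ((starRingEnd ℂ) (c l₀) - c l₀)) = 0 := by
        push_cast
        linear_combination heq2
      have hcc : (starRingEnd ℂ) (c l₀) = c l₀ := by
        rcases mul_eq_zero.mp hzero with h | h
        · exact absurd h hX
        · rcases mul_eq_zero.mp h with h' | h'
          · exact absurd h' Complex.I_ne_zero
          · exact sub_eq_zero.mp h'
      rw [hcc] at heq1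
      have hmul : c l₀ * ((1 + lam * pw m k l₀ : ℝ) : ℂ) = 1 := by
        push_cast
        linear_combination heq1 / 2
      exact eq_inv_of_mul_eq_one_left hmul
end

section
/- For every λ > 0 and distinct points p_1,…,p_n ∈ 𝕋^m, the n×n matrix G_λ with entries (G_λ)_{ij} = g_λ(p_i − p_j), where g_λ(x) = ∑_{l ∈ ℤ^m} cos(2π l·x)/(1 + λ‖l‖_{2k}^{2k}) and k > m/2, is symmetric positive definite. -/
/-- The kernel `g_λ(x) = ∑_{l ∈ ℤ^m} cos(2π l·x) / (1 + λ‖l‖_{2k}^{2k})`,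
where `‖l‖_{2k}^{2k} = ∑_{j=1}^m l_j^{2k}`. -/
noncomputable def gfun (m k : ℕ) (lam : ℝ) (x : Fin m → ℝ) : ℝ :=
  ∑' l : Fin m → ℤ,
    Real.cos (2 * Real.pi * ∑ j, (l j : ℝ) * x j) / (1 + lam * ∑ j, ((l j : ℝ)) ^ (2 * k))

open Real Finset


lemma gsum (m k : ℕ) (hm : 0 < m) (hmk : (m:ℝ) < 2*k) :
    Summable (fun n : ℤ => (1 + (n:ℝ) ^ (2*k)) ^ (-(1/(m:ℝ)) : ℝ)) := by
  set b : ℝ := (2*k : ℝ) / m with hb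
  have hb1 : 1 < b := (one_lt_div (by positivity)).2 hmk
  apply Summable.of_norm_bounded_eventually (summable_abs_int_rpow hb1)
  rw [Filter.eventually_cofinite]
  refine Set.Finite.subset (Set.finite_singleton (0:ℤ)) ?_
  intro n hn
  simp only [Set.mem_setOf_eq, not_le, Set.mem_singleton_iff] at hn ⊢
  by_contra h0
  have h1 : (1:ℝ) ≤ |(n:ℝ)| := by
    have : (1:ℤ) ≤ |n| := Int.one_le_abs (by exact_mod_cast h0)
    calc (1:ℝ) ≤ (|n| : ℤ) := by exact_mod_cast this
    _ = |(n:ℝ)| := by push_cast; ring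
  have hpow : (0:ℝ) < (n:ℝ)^(2*k) :=
    (even_two_mul k).pow_pos (by exact_mod_cast h0)
  have key : (1 + (n:ℝ) ^ (2*k)) ^ (-(1/(m:ℝ)) : ℝ) ≤ |(n:ℝ)| ^ (-b) := by
    have h2 : ((n:ℝ)^(2*k)) ^ (-(1/(m:ℝ)) : ℝ) = |(n:ℝ)| ^ (-b) := by
      rw [← (even_two_mul k).pow_abs, ← Real.rpow_natCast |(n:ℝ)| (2*k), ← Real.rpow_mul (abs_nonneg _)]
      congr 1
      push_cast [hb]
      field_simp
    calc (1 + (n:ℝ) ^ (2*k)) ^ (-(1/(m:ℝ)) : ℝ)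
        ≤ ((n:ℝ)^(2*k)) ^ (-(1/(m:ℝ)) : ℝ) := by
          apply Real.rpow_le_rpow_of_nonpos hpow (by linarith) (neg_nonpos.2 (by positivity))
      _ = _ := h2
  have hnn : (0:ℝ) ≤ (1 + (n:ℝ) ^ (2*k)) ^ (-(1/(m:ℝ)) : ℝ) :=
    Real.rpow_nonneg (by positivity) _
  rw [Real.norm_eq_abs, abs_of_nonneg hnn] at hn
  exact absurd key (not_le.2 hn)


lemma pisum (m : ℕ) (g : ℤ → ℝ) (hg : ∀ n, 0 ≤ g n) (hsum : Summable g) :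
    Summable (fun l : Fin m → ℤ => ∏ j, g (l j)) := by
  induction m with
  | zero => exact Summable.of_finite
  | succ m ih =>
    have H : Summable (fun x : ℤ × (Fin m → ℤ) => g x.1 * ∏ j, g (x.2 j)) :=
      Summable.mul_of_nonneg (f := g) (g := fun l : Fin m → ℤ => ∏ j, g (l j))
        hsum ih (Pi.le_def.mpr hg) (Pi.le_def.mpr fun x => Finset.prod_nonneg fun j _ => hg _)
    have H2 := H.comp_injective
      (i := fun l : Fin (m+1) → ℤ => ((l 0, fun j => l j.succ) : ℤ × (Fin m → ℤ)))
      (fun a b hab => by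
        funext j
        have h1 := congrArg Prod.fst hab
        have h2 := congrArg Prod.snd hab
        simp only at h1 h2
        rcases Fin.eq_zero_or_eq_succ j with h | ⟨j', rfl⟩
        · rw [h]; exact h1
        · exact congrFun h2 j')
    apply H2.congr
    intro l
    simp only [Function.comp_apply]
    rw [Fin.prod_univ_succ]

lemma wsum (m k : ℕ) (hm : 0 < m) (hmk : (m:ℝ) < 2*k) (lam : ℝ) (hlam : 0 < lam) :
    Summable (fun l : Fin m → ℤ => (1 + lam * ∑ j, ((l j : ℝ)) ^ (2*k))⁻¹) := by
  set g : ℤ → ℝ := fun n => (1 + (n:ℝ)^(2*k)) ^ (-(1/(m:ℝ)) : ℝ) with hgdef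
  have hbase : ∀ n : ℤ, (0:ℝ) < 1 + (n:ℝ)^(2*k) := fun n => by
    have : (0:ℝ) ≤ (n:ℝ)^(2*k) := (even_two_mul k).pow_nonneg _
    linarith
  have hg : ∀ n, 0 ≤ g n := fun n => Real.rpow_nonneg (hbase n).le _
  have hmin : (0:ℝ) < min 1 lam := lt_min one_pos hlam
  refine Summable.of_nonneg_of_le
    (f := fun l : Fin m → ℤ => (min 1 lam)⁻¹ * ∏ j, g (l j)) ?_ ?_ ?_
  · intro l
    have hS : (0:ℝ) ≤ ∑ j, ((l j : ℝ)) ^ (2*k) :=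
      Finset.sum_nonneg fun j _ => (even_two_mul k).pow_nonneg _
    positivity
  · intro l
    set S : ℝ := ∑ j, ((l j : ℝ)) ^ (2*k) with hSdef
    have hS : (0:ℝ) ≤ S := Finset.sum_nonneg fun j _ => (even_two_mul k).pow_nonneg _
    have hfacle : ∀ j : Fin m, 1 + ((l j : ℝ))^(2*k) ≤ 1 + S := fun j => by
      have : ((l j : ℝ))^(2*k) ≤ S := by
        rw [hSdef]
        exact Finset.single_le_sum (f := fun i => ((l i : ℝ))^(2*k))
          (fun i _ => (even_two_mul k).pow_nonneg _) (Finset.mem_univ j)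
      linarith
    have hprodpos : (0:ℝ) < ∏ j, (1 + ((l j : ℝ))^(2*k)) :=
      Finset.prod_pos fun j _ => hbase _
    have hprodle : ∏ j, (1 + ((l j : ℝ))^(2*k)) ≤ (1 + S)^m := by
      calc ∏ j, (1 + ((l j : ℝ))^(2*k)) ≤ ∏ _j : Fin m, (1 + S) :=
            Finset.prod_le_prod (fun j _ => (hbase _).le) (fun j _ => hfacle j)
        _ = (1 + S)^m := by rw [Finset.prod_const, Finset.card_univ, Fintype.card_fin]
    have hgprod : ∏ j, g (l j) = (∏ j, (1 + ((l j : ℝ))^(2*k))) ^ (-(1/(m:ℝ)) : ℝ) := by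
      rw [← Real.finset_prod_rpow _ _ (fun j _ => (hbase _).le)]
    have hkey : (1 + S)⁻¹ ≤ ∏ j, g (l j) := by
      rw [hgprod]
      have h2 : ((1 + S)^m) ^ (-(1/(m:ℝ)) : ℝ) = (1 + S)⁻¹ := by
        rw [← Real.rpow_natCast (1+S) m, ← Real.rpow_mul (by linarith)]
        rw [show (m:ℝ) * (-(1/(m:ℝ))) = -1 by field_simp, Real.rpow_neg_one]
      rw [← h2]
      exact Real.rpow_le_rpow_of_nonpos hprodpos hprodle (neg_nonpos.2 (by positivity))
    have h1 : (1 + lam * S)⁻¹ ≤ (min 1 lam)⁻¹ * (1 + S)⁻¹ := by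
      have hle : min 1 lam * (1 + S) ≤ 1 + lam * S := by
        have h1' := min_le_left (1:ℝ) lam
        have h2' := min_le_right (1:ℝ) lam
        nlinarith
      calc (1 + lam * S)⁻¹ ≤ (min 1 lam * (1 + S))⁻¹ := by
            apply inv_anti₀ (by positivity) hle
        _ = (min 1 lam)⁻¹ * (1 + S)⁻¹ := by rw [mul_inv]
    calc (1 + lam * S)⁻¹ ≤ (min 1 lam)⁻¹ * (1 + S)⁻¹ := h1
      _ ≤ (min 1 lam)⁻¹ * ∏ j, g (l j) := by
          apply mul_le_mul_of_nonneg_left hkey (by positivity)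
  · exact (pisum m g hg (gsum m k hm hmk)).mul_left _


noncomputable def charh (m : ℕ) (q : Fin m → ℝ) : Multiplicative (Fin m → ℤ) →* ℂ where
  toFun l := Complex.exp ((2 * Real.pi * ∑ j, ((Multiplicative.toAdd l) j : ℝ) * q j : ℝ) * Complex.I)
  map_one' := by
    have : (Multiplicative.toAdd (1 : Multiplicative (Fin m → ℤ))) = 0 := rfl
    simp [this]
  map_mul' a b := by
    show Complex.exp _ = _
    rw [← Complex.exp_add]
    congr 1
    have hab : Multiplicative.toAdd (a * b) = Multiplicative.toAdd a + Multiplicative.toAdd b := rfl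
    rw [← add_mul, ← Complex.ofReal_add]
    congr 1
    rw [hab, ← mul_add, ← Finset.sum_add_distrib]
    refine congrArg (fun s => ((2 * Real.pi * s : ℝ) : ℂ)) (Finset.sum_congr rfl fun j _ => ?_)
    push_cast [Pi.add_apply]
    ring

lemma char_ne (m n : ℕ) (p : Fin n → Fin m → ℝ)
    (hp : ∀ i j : Fin n, (∀ t, ∃ z : ℤ, p i t - p j t = (z : ℝ)) → i = j)
    (x : Fin n → ℝ) (hx : x ≠ 0) :
    ∃ l : Fin m → ℤ,
      (∑ i, (x i : ℂ) * Complex.exp ((2 * Real.pi * ∑ j, ((l j : ℤ) : ℝ) * p i j : ℝ) * Complex.I)) ≠ 0 := by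
  by_contra h
  push_neg at h
  have hinj : Function.Injective (fun i => charh m (p i)) := by
    intro i i' hii
    apply hp
    intro t
    have heval := congrArg (fun f : Multiplicative (Fin m → ℤ) →* ℂ =>
      f (Multiplicative.ofAdd (Pi.single t (1:ℤ)))) hii
    simp only [charh, MonoidHom.coe_mk, OneHom.coe_mk, toAdd_ofAdd] at heval
    have hsum : ∀ i'' : Fin n,
        ∑ j, (((Pi.single t (1:ℤ) : Fin m → ℤ) j : ℝ) * p i'' j) = p i'' t := by
      intro i''
      rw [Finset.sum_eq_single t]
      · simp
      · intro j _ hj; simp [Pi.single_eq_of_ne hj]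
      · intro habs; exact absurd (Finset.mem_univ t) habs
    rw [hsum i, hsum i'] at heval
    rw [Complex.exp_eq_exp_iff_exists_int] at heval
    obtain ⟨z, hz⟩ := heval
    refine ⟨z, ?_⟩
    have him := congrArg Complex.im hz
    simp [Complex.add_im, Complex.mul_im] at him
    have hpi := Real.pi_ne_zero
    have h2 : 2 * Real.pi * (p i t - p i' t - z) = 0 := by ring_nf; linarith [him]
    have := mul_eq_zero.mp h2
    rcases this with h3 | h3
    · exact absurd h3 (by positivity)
    · linarith
  have li : LinearIndependent ℂ
      (fun i : Fin n => ((charh m (p i)) : Multiplicative (Fin m → ℤ) → ℂ)) :=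
    (linearIndependent_monoidHom (Multiplicative (Fin m → ℤ)) ℂ).comp
      (fun i => charh m (p i)) hinj
  have hz : ∑ i, (x i : ℂ) • ((charh m (p i)) : Multiplicative (Fin m → ℤ) → ℂ) = 0 := by
    funext l
    have := h (Multiplicative.toAdd l)
    simpa [charh] using this
  have hall := Fintype.linearIndependent_iff.mp li (fun i => (x i : ℂ)) hz
  apply hx
  funext i
  simpa using hall i

/-- For every `λ > 0` and points `p_1,…,p_n` that are distinct as points of the
torus `𝕋^m`, the `n × n` matrix `G_λ` with entries `(G_λ)_{ij} = g_λ(p_i − p_j)`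
is symmetric positive definite (`k > m/2`). -/
theorem stmt_7 (m k n : ℕ) (hm : 0 < m) (hk : 0 < k) (hkm : (m : ℝ) / 2 < (k : ℝ))
    (lam : ℝ) (hlam : 0 < lam) (p : Fin n → Fin m → ℝ)
    (hp : ∀ i j : Fin n, (∀ t, ∃ z : ℤ, p i t - p j t = (z : ℝ)) → i = j) :
    (Matrix.of fun i j : Fin n => gfun m k lam (p i - p j)).PosDef := by
  have hm2k : (m:ℝ) < 2*k := by linarith
  set w : (Fin m → ℤ) → ℝ := fun l => (1 + lam * ∑ j, ((l j : ℝ)) ^ (2*k))⁻¹ with hwdef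
  have hwpos : ∀ l, 0 < w l := fun l => by
    have h0 : (0:ℝ) ≤ ∑ j, ((l j:ℝ))^(2*k) :=
      Finset.sum_nonneg fun j _ => (even_two_mul k).pow_nonneg _
    rw [hwdef]
    positivity
  have hwsum : Summable w := wsum m k hm hm2k lam hlam
  have hgfun : ∀ y : Fin m → ℝ,
      gfun m k lam y = ∑' l, Real.cos (2*Real.pi * ∑ j, (l j:ℝ) * y j) * w l := by
    intro y; unfold gfun; exact tsum_congr fun l => div_eq_mul_inv _ _
  have heven : ∀ y, gfun m k lam (-y) = gfun m k lam y := by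
    intro y
    unfold gfun
    rw [← (Equiv.neg (Fin m → ℤ)).tsum_eq]
    apply tsum_congr
    intro l
    simp only [Equiv.neg_apply, Pi.neg_apply, Int.cast_neg, neg_mul_neg,
      (even_two_mul k).neg_pow]
  set θ : (Fin m → ℤ) → Fin n → ℝ := fun l i => 2 * Real.pi * ∑ j, (l j : ℝ) * p i j with hθdef
  have hdiff : ∀ (l : Fin m → ℤ) (i j : Fin n),
      2*Real.pi * ∑ t, (l t:ℝ) * (p i - p j) t = θ l i - θ l j := by
    intro l i j
    rw [hθdef]
    simp only [Pi.sub_apply]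
    rw [← mul_sub, ← Finset.sum_sub_distrib]
    refine congrArg (fun s => 2 * Real.pi * s) (Finset.sum_congr rfl fun t _ => ?_)
    ring
  have hentry : ∀ i j : Fin n,
      gfun m k lam (p i - p j) = ∑' l, Real.cos (θ l i - θ l j) * w l := by
    intro i j
    rw [hgfun]
    exact tsum_congr fun l => by rw [hdiff l i j]
  refine Matrix.posDef_iff_dotProduct_mulVec.mpr ⟨?_, ?_⟩
  · show Matrix.conjTranspose _ = _
    ext i j
    simp only [Matrix.conjTranspose_apply, Matrix.of_apply, star_trivial]
    rw [← neg_sub (p i) (p j), heven]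
  · intro x hx
    have hstar : star x = x := funext fun i => star_trivial _
    rw [hstar]
    set C : (Fin m → ℤ) → ℝ := fun l => ∑ i, x i * Real.cos (θ l i) with hCdef
    set S : (Fin m → ℤ) → ℝ := fun l => ∑ i, x i * Real.sin (θ l i) with hSdef
    have hsummF : ∀ i j : Fin n,
        Summable (fun l => (x i * x j) * (Real.cos (θ l i - θ l j) * w l)) := by
      intro i j
      apply Summable.of_norm_bounded (g := fun l => |x i * x j| * w l) (hwsum.mul_left _)
      intro l
      rw [Real.norm_eq_abs, abs_mul, abs_mul, abs_mul, abs_of_pos (hwpos l)]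
      have h1 : |Real.cos (θ l i - θ l j)| ≤ 1 := Real.abs_cos_le_one _
      have := mul_le_of_le_one_left (hwpos l).le h1
      nlinarith [abs_nonneg (x i), abs_nonneg (x j), (hwpos l).le,
        mul_nonneg (abs_nonneg (x i)) (abs_nonneg (x j))]
    have hsumRow : ∀ i : Fin n,
        Summable (fun l => ∑ j, (x i * x j) * (Real.cos (θ l i - θ l j) * w l)) :=
      fun i => summable_sum fun j _ => hsummF i j
    have hsumAll : Summable (fun l => ∑ i, ∑ j, (x i * x j) * (Real.cos (θ l i - θ l j) * w l)) :=
      summable_sum fun i _ => hsumRow i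
    have hq : dotProduct x (Matrix.mulVec (Matrix.of fun i j : Fin n => gfun m k lam (p i - p j)) x)
        = ∑' l, ∑ i, ∑ j, (x i * x j) * (Real.cos (θ l i - θ l j) * w l) := by
      calc dotProduct x (Matrix.mulVec (Matrix.of fun i j : Fin n => gfun m k lam (p i - p j)) x)
          = ∑ i, ∑ j, (x i * x j) * ∑' l, Real.cos (θ l i - θ l j) * w l := by
            simp only [dotProduct, Matrix.mulVec, Matrix.of_apply, Finset.mul_sum]
            exact Finset.sum_congr rfl fun i _ => Finset.sum_congr rfl fun j _ => by
              rw [hentry i j]; ring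
        _ = ∑ i, ∑ j, ∑' l, (x i * x j) * (Real.cos (θ l i - θ l j) * w l) := by
            exact Finset.sum_congr rfl fun i _ => Finset.sum_congr rfl fun j _ =>
              (tsum_mul_left).symm
        _ = ∑ i, ∑' l, ∑ j, (x i * x j) * (Real.cos (θ l i - θ l j) * w l) := by
            exact Finset.sum_congr rfl fun i _ => (Summable.tsum_finsetSum fun j _ => hsummF i j).symm
        _ = ∑' l, ∑ i, ∑ j, (x i * x j) * (Real.cos (θ l i - θ l j) * w l) :=
            (Summable.tsum_finsetSum fun i _ => hsumRow i).symm
    have hCS : ∀ l, ∑ i, ∑ j, (x i * x j) * (Real.cos (θ l i - θ l j) * w l)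
        = (C l^2 + S l^2) * w l := by
      intro l
      have step : ∑ i, ∑ j, (x i * x j) * (Real.cos (θ l i - θ l j) * w l)
          = (∑ i, ∑ j, ((x i * Real.cos (θ l i)) * (x j * Real.cos (θ l j))
              + (x i * Real.sin (θ l i)) * (x j * Real.sin (θ l j)))) * w l := by
        rw [Finset.sum_mul]
        refine Finset.sum_congr rfl fun i _ => ?_
        rw [Finset.sum_mul]
        refine Finset.sum_congr rfl fun j _ => ?_
        rw [Real.cos_sub]; ring
      rw [step]
      congr 1
      rw [hCdef, hSdef]
      simp only [Finset.sum_add_distrib]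
      rw [pow_two, pow_two, Finset.sum_mul_sum, Finset.sum_mul_sum]
    obtain ⟨l₀, hl₀⟩ := char_ne m n p hp x hx
    have hzval : ∑ i, (x i : ℂ) * Complex.exp ((θ l₀ i : ℝ) * Complex.I)
        = ((C l₀ : ℝ) : ℂ) + ((S l₀ : ℝ) : ℂ) * Complex.I := by
      calc ∑ i, (x i:ℂ) * Complex.exp ((θ l₀ i : ℝ) * Complex.I)
          = ∑ i, (((x i * Real.cos (θ l₀ i) :ℝ):ℂ) + ((x i * Real.sin (θ l₀ i):ℝ):ℂ) * Complex.I) := by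
            refine Finset.sum_congr rfl fun i _ => ?_
            rw [Complex.exp_mul_I, ← Complex.ofReal_cos, ← Complex.ofReal_sin]
            push_cast
            ring
        _ = ((C l₀ : ℝ) : ℂ) + ((S l₀ : ℝ) : ℂ) * Complex.I := by
            rw [Finset.sum_add_distrib, ← Finset.sum_mul, hCdef, hSdef]
            push_cast
            ring
    have hpos : 0 < C l₀^2 + S l₀^2 := by
      rcases (lt_or_eq_of_le (by positivity : (0:ℝ) ≤ C l₀^2 + S l₀^2)) with h | h
      · exact h
      · exfalso
        have hC0 : C l₀ = 0 := by nlinarith [sq_nonneg (C l₀), sq_nonneg (S l₀)]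
        have hS0 : S l₀ = 0 := by nlinarith [sq_nonneg (C l₀), sq_nonneg (S l₀)]
        apply hl₀
        rw [show (∑ i, (x i : ℂ) * Complex.exp ((2 * Real.pi * ∑ j, ((l₀ j : ℤ) : ℝ) * p i j : ℝ) * Complex.I))
            = ∑ i, (x i : ℂ) * Complex.exp ((θ l₀ i : ℝ) * Complex.I) from rfl]
        rw [hzval, hC0, hS0]
        simp
    rw [hq]
    have hsum' : Summable (fun l => (C l^2 + S l^2) * w l) := hsumAll.congr hCS
    calc (0:ℝ) < ∑' l, (C l^2 + S l^2) * w l :=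
          Summable.tsum_pos hsum' (fun l => mul_nonneg (by positivity) (hwpos l).le) l₀
            (mul_pos hpos (hwpos l₀))
      _ = ∑' l, ∑ i, ∑ j, (x i * x j) * (Real.cos (θ l i - θ l j) * w l) :=
          tsum_congr fun l => (hCS l).symm
end

section
/- Let M_λ = (1/n)G_λ + (1/λ²)I where G_λ is the positive definite matrix with entries g_λ(p_i−p_j). Then the condition number of M_λ satisfies κ(M_λ) ≤ 1 + ∑_{l ∈ ℤ^m} λ²/(1 + λ‖l‖_{2k}^{2k}), a bound independent of n and of the point locations p_i. -/
lemma summable_pi_prod {h : ℤ → ℝ} (h0 : ∀ z, 0 ≤ h z) (hs : Summable h) :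
    ∀ m : ℕ, Summable fun l : Fin m → ℤ => ∏ j, h (l j) := by
  intro m
  induction m with
  | zero => exact Summable.of_finite
  | succ m ih =>
    have key : Summable fun x : ℤ × (Fin m → ℤ) => h x.1 * ∏ j, h (x.2 j) := by
      apply Summable.mul_of_nonneg hs ih
      · exact fun z => h0 z
      · exact fun l => Finset.prod_nonneg fun j _ => h0 _
    have hφ : Function.Injective
        (fun l : Fin (m+1) → ℤ => ((l 0, fun j => l j.succ) : ℤ × (Fin m → ℤ))) := by
      intro a b hab
      simp only [Prod.mk.injEq] at hab
      funext i
      cases i using Fin.cases with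
      | zero => exact hab.1
      | succ j => exact congrFun hab.2 j
    have h2 := key.comp_injective hφ
    refine h2.congr fun l => ?_
    exact (Fin.prod_univ_succ fun j => h (l j)).symm

lemma pow_two_mul_nonneg_tmp (a : ℝ) (k : ℕ) : 0 ≤ a ^ (2 * k) :=
  Even.pow_nonneg (even_two_mul k) a

lemma summable_dinv (m k : ℕ) (hm : 0 < m) (hkm : (m : ℝ) / 2 < (k : ℝ))
    (lam : ℝ) (hlam : 0 < lam) :
    Summable fun l : Fin m → ℤ => (1 + lam * ∑ j, ((l j : ℝ)) ^ (2 * k))⁻¹ := by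
  have hm' : (0:ℝ) < m := by exact_mod_cast hm
  set b : ℝ := 2 * k / m with hb_def
  have hb : 1 < b := by rw [hb_def, lt_div_iff₀ hm']; linarith
  set h : ℤ → ℝ := fun z => (1 + ((z:ℝ)) ^ (2 * k)) ^ (-(1/(m:ℝ))) with hh_def
  have hden : ∀ z : ℤ, (0:ℝ) < 1 + ((z:ℝ)) ^ (2 * k) := fun z => by
    have := pow_two_mul_nonneg_tmp ((z:ℝ)) k; linarith
  have h0 : ∀ z, 0 ≤ h z := fun z => Real.rpow_nonneg (hden z).le _
  have hs : Summable h := by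
    rw [← (Set.finite_singleton (0:ℤ)).summable_compl_iff]
    apply Summable.of_nonneg_of_le (f := fun z : ↥({(0:ℤ)}ᶜ : Set ℤ) => |((z:ℤ):ℝ)| ^ (-b))
    · exact fun z => h0 _
    · intro z
      have hz : (z : ℤ) ≠ 0 := z.2
      have h1 : (1:ℝ) ≤ |((z:ℤ):ℝ)| := by
        rw [← Int.cast_abs]; exact_mod_cast Int.one_le_abs hz
      have habs : |((z:ℤ):ℝ)| ^ (2*k) = ((z:ℤ):ℝ) ^ (2*k) := by
        rw [pow_abs, abs_of_nonneg (pow_two_mul_nonneg_tmp _ _)]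
      have h2 : |((z:ℤ):ℝ)| ^ (2*k) ≤ 1 + ((z:ℤ):ℝ) ^ (2*k) := by
        rw [habs]; linarith
      have hpos : 0 < |((z:ℤ):ℝ)| ^ (2*k) := pow_pos (lt_of_lt_of_le one_pos h1) _
      have h3 : h (z:ℤ) ≤ (|((z:ℤ):ℝ)| ^ (2*k)) ^ (-(1/(m:ℝ))) :=
        Real.rpow_le_rpow_of_nonpos hpos h2 (by rw [neg_nonpos]; positivity)
      refine h3.trans_eq ?_
      rw [← Real.rpow_natCast (|((z:ℤ):ℝ)|) (2*k), ← Real.rpow_mul (abs_nonneg _)]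
      congr 1
      push_cast
      rw [hb_def]; field_simp [ne_of_gt hm']
    · exact (Real.summable_abs_int_rpow hb).subtype _
  have hprod := summable_pi_prod h0 hs m
  apply Summable.of_nonneg_of_le _ _ (hprod.mul_left (min 1 lam)⁻¹)
  · intro l
    have : 0 ≤ ∑ j, ((l j : ℝ)) ^ (2*k) :=
      Finset.sum_nonneg fun j _ => pow_two_mul_nonneg_tmp _ _
    positivity
  · intro l
    set A : ℝ := ∑ j, ((l j:ℝ)) ^ (2*k) with hA_def
    have hA : 0 ≤ A := Finset.sum_nonneg fun j _ => pow_two_mul_nonneg_tmp _ _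
    set P : ℝ := ∏ j, (1 + ((l j:ℝ)) ^ (2*k)) with hP_def
    have hP : 0 < P := Finset.prod_pos fun j _ => hden _
    have step1 : ∏ j, h (l j) = P ^ (-(1/(m:ℝ))) := by
      rw [hP_def, ← Real.finset_prod_rpow _ _ (fun j _ => (hden (l j)).le)]
    have step2 : P ≤ (1 + A) ^ m := by
      calc P ≤ ∏ _j : Fin m, (1 + A) := by
              apply Finset.prod_le_prod (fun j _ => (hden _).le)
              intro j _
              have : ((l j:ℝ)) ^ (2*k) ≤ A :=
                Finset.single_le_sum (fun i _ => pow_two_mul_nonneg_tmp ((l i:ℝ)) k)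
                  (Finset.mem_univ j)
              linarith
        _ = (1 + A) ^ m := by rw [Finset.prod_const, Finset.card_univ, Fintype.card_fin]
    have step2' : P ^ ((1:ℝ)/m) ≤ 1 + A := by
      calc P ^ ((1:ℝ)/m) ≤ ((1 + A) ^ m) ^ ((1:ℝ)/m) :=
            Real.rpow_le_rpow hP.le step2 (by positivity)
        _ = 1 + A := by
            rw [← Real.rpow_natCast (1+A) m, ← Real.rpow_mul (by linarith),
              mul_one_div, div_self (ne_of_gt hm'), Real.rpow_one]
    have step3 : (1 + A)⁻¹ ≤ P ^ (-(1/(m:ℝ))) := by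
      rw [Real.rpow_neg hP.le]
      exact inv_anti₀ (Real.rpow_pos_of_pos hP _) step2'
    have hmin : 0 < min 1 lam := lt_min one_pos hlam
    have step4 : (1 + lam * A)⁻¹ ≤ (min 1 lam)⁻¹ * (1 + A)⁻¹ := by
      rw [← mul_inv]
      apply inv_anti₀ (by positivity)
      have h5 : min 1 lam * A ≤ lam * A :=
        mul_le_mul_of_nonneg_right (min_le_right _ _) hA
      have h6 : min 1 lam ≤ 1 := min_le_left _ _
      nlinarith
    calc (1 + lam * A)⁻¹ ≤ (min 1 lam)⁻¹ * (1 + A)⁻¹ := step4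
      _ ≤ (min 1 lam)⁻¹ * (P ^ (-(1/(m:ℝ)))) := by
          apply mul_le_mul_of_nonneg_left step3 (by positivity)
      _ = (min 1 lam)⁻¹ * ∏ j, h (l j) := by rw [step1]

lemma pow_two_mul_nonneg' (a : ℝ) (k : ℕ) : 0 ≤ a ^ (2 * k) :=
  Even.pow_nonneg (even_two_mul k) a

lemma gfun_neg (m k : ℕ) (lam : ℝ) (x : Fin m → ℝ) :
    gfun m k lam (-x) = gfun m k lam x := by
  unfold gfun
  rw [← (Equiv.neg (Fin m → ℤ)).tsum_eq]
  apply tsum_congr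
  intro l
  have h1 : ∑ j, (((Equiv.neg (Fin m → ℤ)) l j : ℝ)) * (-x) j = ∑ j, ((l j : ℝ)) * x j := by
    apply Finset.sum_congr rfl
    intro j _
    simp
  have h2 : ∀ j, (((Equiv.neg (Fin m → ℤ)) l j : ℝ)) ^ (2 * k) = ((l j : ℝ)) ^ (2 * k) := by
    intro j
    simp only [Equiv.neg_apply, Pi.neg_apply, Int.cast_neg]
    exact Even.neg_pow (even_two_mul k) _
  rw [h1]
  simp only [h2]

section QF

variable {m k n : ℕ} {lam : ℝ} (p : Fin n → Fin m → ℝ)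

lemma summable_bdd (hlam : 0 < lam)
    (hsum : Summable fun l : Fin m → ℤ => (1 + lam * ∑ j, ((l j : ℝ)) ^ (2 * k))⁻¹)
    (c : (Fin m → ℤ) → ℝ) (C : ℝ) (hc : ∀ l, |c l| ≤ C) :
    Summable fun l : Fin m → ℤ => c l * (1 + lam * ∑ j, ((l j : ℝ)) ^ (2 * k))⁻¹ := by
  have hd : ∀ l : Fin m → ℤ, (0:ℝ) < 1 + lam * ∑ j, ((l j : ℝ)) ^ (2 * k) := by
    intro l
    have : 0 ≤ ∑ j, ((l j : ℝ)) ^ (2 * k) :=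
      Finset.sum_nonneg fun j _ => pow_two_mul_nonneg' _ _
    positivity
  apply Summable.of_abs
  apply Summable.of_nonneg_of_le (fun l => abs_nonneg _) _ (hsum.mul_left C)
  intro l
  rw [abs_mul, abs_inv, abs_of_pos (hd l)]
  exact mul_le_mul_of_nonneg_right (hc l) (inv_nonneg.2 (hd l).le)

lemma qf_bounds (hlam : 0 < lam)
    (hsum : Summable fun l : Fin m → ℤ => (1 + lam * ∑ j, ((l j : ℝ)) ^ (2 * k))⁻¹)
    (x : Fin n → ℝ) :
    0 ≤ ∑ a, ∑ b, x a * x b * gfun m k lam (p a - p b) ∧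
      ∑ a, ∑ b, x a * x b * gfun m k lam (p a - p b) ≤
        (∑' l : Fin m → ℤ, (1 + lam * ∑ j, ((l j : ℝ)) ^ (2 * k))⁻¹)
          * ((n : ℝ) * ∑ a, (x a) ^ 2) := by
  classical
  set d : (Fin m → ℤ) → ℝ := fun l => 1 + lam * ∑ j, ((l j : ℝ)) ^ (2 * k) with hd_def
  have hd : ∀ l, (0:ℝ) < d l := by
    intro l
    have : 0 ≤ ∑ j, ((l j : ℝ)) ^ (2 * k) :=
      Finset.sum_nonneg fun j _ => pow_two_mul_nonneg' _ _
    rw [hd_def]; positivity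
  set θ : (Fin m → ℤ) → Fin n → ℝ := fun l i => 2 * Real.pi * ∑ t, ((l t : ℝ)) * p i t
    with hθ_def
  -- entries as tsum of cos differences
  have hentry : ∀ a b : Fin n,
      gfun m k lam (p a - p b) = ∑' l, Real.cos (θ l a - θ l b) * (d l)⁻¹ := by
    intro a b
    unfold gfun
    apply tsum_congr
    intro l
    rw [div_eq_mul_inv]
    congr 2
    rw [hθ_def]
    simp only
    rw [← mul_sub, ← Finset.sum_sub_distrib]
    congr 1
    apply Finset.sum_congr rfl
    intro t _
    simp [Pi.sub_apply, mul_sub]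
  -- summability of each entry's series with coefficients
  have hGsummable : ∀ a b : Fin n,
      Summable fun l => x a * x b * (Real.cos (θ l a - θ l b) * (d l)⁻¹) := by
    intro a b
    have := summable_bdd hlam hsum (fun l => x a * x b * Real.cos (θ l a - θ l b))
      (|x a * x b|) (fun l => by
        rw [abs_mul]
        exact (mul_le_mul_of_nonneg_left (Real.abs_cos_le_one _) (abs_nonneg _)).trans_eq
          (mul_one _))
    exact this.congr fun l => by ring
  -- swap sums
  set F : (Fin m → ℤ) → ℝ := fun l =>
    ((∑ a, x a * Real.cos (θ l a)) ^ 2 + (∑ a, x a * Real.sin (θ l a)) ^ 2) * (d l)⁻¹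
    with hF_def
  have hswap : ∑ a, ∑ b, x a * x b * gfun m k lam (p a - p b) = ∑' l, F l := by
    have e1 : ∀ a : Fin n, ∑ b, x a * x b * gfun m k lam (p a - p b)
        = ∑' l, ∑ b, x a * x b * (Real.cos (θ l a - θ l b) * (d l)⁻¹) := by
      intro a
      rw [Summable.tsum_finsetSum (fun b _ => hGsummable a b)]
      apply Finset.sum_congr rfl
      intro b _
      rw [hentry a b, ← tsum_mul_left]
    have hsummable2 : ∀ a : Fin n,
        Summable fun l => ∑ b, x a * x b * (Real.cos (θ l a - θ l b) * (d l)⁻¹) :=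
      fun a => summable_sum fun b _ => hGsummable a b
    calc ∑ a, ∑ b, x a * x b * gfun m k lam (p a - p b)
        = ∑ a, ∑' l, ∑ b, x a * x b * (Real.cos (θ l a - θ l b) * (d l)⁻¹) :=
          Finset.sum_congr rfl fun a _ => e1 a
      _ = ∑' l, ∑ a, ∑ b, x a * x b * (Real.cos (θ l a - θ l b) * (d l)⁻¹) :=
          (Summable.tsum_finsetSum fun a _ => hsummable2 a).symm
      _ = ∑' l, F l := by
          apply tsum_congr
          intro l
          rw [hF_def]
          simp only
          calc ∑ a, ∑ b, x a * x b * (Real.cos (θ l a - θ l b) * (d l)⁻¹)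
              = ∑ a, ∑ b, ((x a * Real.cos (θ l a)) * (x b * Real.cos (θ l b)) * (d l)⁻¹
                + (x a * Real.sin (θ l a)) * (x b * Real.sin (θ l b)) * (d l)⁻¹) := by
                refine Finset.sum_congr rfl fun a _ => Finset.sum_congr rfl fun b _ => ?_
                rw [Real.cos_sub]; ring
            _ = (∑ a, ∑ b, (x a * Real.cos (θ l a)) * (x b * Real.cos (θ l b))) * (d l)⁻¹
                + (∑ a, ∑ b, (x a * Real.sin (θ l a)) * (x b * Real.sin (θ l b))) * (d l)⁻¹ := by
                simp [Finset.sum_add_distrib, Finset.sum_mul]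
            _ = ((∑ a, x a * Real.cos (θ l a)) ^ 2 + (∑ a, x a * Real.sin (θ l a)) ^ 2)
                * (d l)⁻¹ := by
                rw [← Finset.sum_mul_sum, ← Finset.sum_mul_sum]
                ring
  -- nonnegativity of F
  have hF0 : ∀ l, 0 ≤ F l := by
    intro l
    rw [hF_def]
    have := (hd l).le
    positivity
  -- upper bound for F
  have hFle : ∀ l, F l ≤ ((n : ℝ) * ∑ a, (x a) ^ 2) * (d l)⁻¹ := by
    intro l
    rw [hF_def]
    simp only
    apply mul_le_mul_of_nonneg_right _ (inv_nonneg.2 (hd l).le)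
    have hcs1 := Finset.sum_mul_sq_le_sq_mul_sq Finset.univ x (fun a => Real.cos (θ l a))
    have hcs2 := Finset.sum_mul_sq_le_sq_mul_sq Finset.univ x (fun a => Real.sin (θ l a))
    have htrig : (∑ a, (Real.cos (θ l a)) ^ 2) + (∑ a, (Real.sin (θ l a)) ^ 2) = (n : ℝ) := by
      rw [← Finset.sum_add_distrib]
      have : ∀ a : Fin n, (Real.cos (θ l a)) ^ 2 + (Real.sin (θ l a)) ^ 2 = 1 := fun a => by
        rw [add_comm]; exact Real.sin_sq_add_cos_sq _
      simp [this]
    have hx2 : 0 ≤ ∑ a, (x a) ^ 2 := Finset.sum_nonneg fun a _ => sq_nonneg _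
    nlinarith [Finset.sum_nonneg (fun a (_ : a ∈ Finset.univ) => sq_nonneg (Real.cos (θ l a))),
      Finset.sum_nonneg (fun a (_ : a ∈ Finset.univ) => sq_nonneg (Real.sin (θ l a)))]
  have hFsummable : Summable F :=
    Summable.of_nonneg_of_le hF0 hFle (hsum.mul_left _)
  constructor
  · rw [hswap]
    exact tsum_nonneg hF0
  · rw [hswap]
    calc ∑' l, F l ≤ ∑' l, ((n : ℝ) * ∑ a, (x a) ^ 2) * (d l)⁻¹ :=
          Summable.tsum_le_tsum hFle hFsummable (hsum.mul_left _)
      _ = ((n : ℝ) * ∑ a, (x a) ^ 2) * ∑' l, (d l)⁻¹ := tsum_mul_left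
      _ = (∑' l, (d l)⁻¹) * ((n : ℝ) * ∑ a, (x a) ^ 2) := mul_comm _ _

end QF

/-- Condition number bound for the interpolation matrix
`M_λ = (1/n) G_λ + (1/λ²) I`, where `(G_λ)_{ij} = g_λ(p_i − p_j)`:
the ratio of any two eigenvalues of `M_λ` is bounded by
`1 + ∑_{l ∈ ℤ^m} λ² / (1 + λ‖l‖_{2k}^{2k})`, independently of `n` and of the
(torus-distinct) point locations `p_i`. -/
theorem stmt_9 (m k n : ℕ) (hm : 0 < m) (hn : 0 < n) (hk : 0 < k)
    (hkm : (m : ℝ) / 2 < (k : ℝ)) (lam : ℝ) (hlam : 0 < lam)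
    (p : Fin n → Fin m → ℝ)
    (hp : ∀ i j : Fin n, (∀ t, ∃ z : ℤ, p i t - p j t = (z : ℝ)) → i = j) :
    ∃ hM : ((n : ℝ)⁻¹ • Matrix.of (fun i j : Fin n => gfun m k lam (p i - p j))
        + (lam ^ 2)⁻¹ • (1 : Matrix (Fin n) (Fin n) ℝ)).IsHermitian,
      ∀ i j : Fin n, hM.eigenvalues i ≤
        (1 + ∑' l : Fin m → ℤ, lam ^ 2 / (1 + lam * ∑ t, ((l t : ℝ)) ^ (2 * k)))
          * hM.eigenvalues j := by
  classical
  have hsum : Summable fun l : Fin m → ℤ => (1 + lam * ∑ j, ((l j : ℝ)) ^ (2 * k))⁻¹ :=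
    summable_dinv m k hm hkm lam hlam
  have hd : ∀ l : Fin m → ℤ, (0:ℝ) < 1 + lam * ∑ j, ((l j : ℝ)) ^ (2 * k) := by
    intro l
    have : 0 ≤ ∑ j, ((l j : ℝ)) ^ (2 * k) :=
      Finset.sum_nonneg fun j _ => pow_two_mul_nonneg' _ _
    positivity
  set S : ℝ := ∑' l : Fin m → ℤ, (1 + lam * ∑ j, ((l j : ℝ)) ^ (2 * k))⁻¹ with hS_def
  have hS0 : 0 ≤ S := tsum_nonneg fun l => inv_nonneg.2 (hd l).le
  set M : Matrix (Fin n) (Fin n) ℝ :=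
    (n : ℝ)⁻¹ • Matrix.of (fun i j : Fin n => gfun m k lam (p i - p j))
      + (lam ^ 2)⁻¹ • (1 : Matrix (Fin n) (Fin n) ℝ) with hM_def
  have hsymm : ∀ i j : Fin n, gfun m k lam (p j - p i) = gfun m k lam (p i - p j) := by
    intro i j
    rw [← neg_sub (p i) (p j), gfun_neg]
  have hM : M.IsHermitian := by
    apply Matrix.IsHermitian.ext
    intro i j
    rw [hM_def]
    simp only [Matrix.add_apply, Matrix.smul_apply, Matrix.of_apply, Matrix.one_apply,
      smul_eq_mul, star_trivial, hsymm i j]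
    by_cases h : i = j <;> simp [h, eq_comm]
  refine ⟨hM, ?_⟩
  have hM_apply : ∀ a b : Fin n, M a b =
      (n : ℝ)⁻¹ * gfun m k lam (p a - p b) + (lam ^ 2)⁻¹ * (if a = b then 1 else 0) := by
    intro a b
    rw [hM_def]
    simp [Matrix.add_apply, Matrix.smul_apply, Matrix.of_apply, Matrix.one_apply, smul_eq_mul]
  have key : ∀ i : Fin n, (lam ^ 2)⁻¹ ≤ hM.eigenvalues i ∧
      hM.eigenvalues i ≤ S + (lam ^ 2)⁻¹ := by
    intro i
    have heig := hM.eigenvalues_eq i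
    set v : Fin n → ℝ := ⇑(hM.eigenvectorBasis i) with hv_def
    have hnorm : ‖hM.eigenvectorBasis i‖ = 1 := hM.eigenvectorBasis.orthonormal.1 i
    have hsq : ∑ a, (v a) ^ 2 = 1 := by
      have h2 : ‖hM.eigenvectorBasis i‖ ^ 2 = 1 := by rw [hnorm]; norm_num
      rw [EuclideanSpace.norm_eq,
        Real.sq_sqrt (Finset.sum_nonneg fun a _ => sq_nonneg _)] at h2
      simpa [Real.norm_eq_abs, sq_abs] using h2
    have hquad : hM.eigenvalues i =
        (n : ℝ)⁻¹ * (∑ a, ∑ b, v a * v b * gfun m k lam (p a - p b)) + (lam ^ 2)⁻¹ := by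
      rw [heig]
      have hdot : dotProduct (star v) (M.mulVec v) = ∑ a, v a * ∑ b, M a b * v b := by
        simp [dotProduct, Matrix.mulVec]
      rw [hdot]
      have hexp : ∀ a : Fin n, v a * ∑ b, M a b * v b =
          ∑ b, ((n : ℝ)⁻¹ * (v a * v b * gfun m k lam (p a - p b))
            + (lam ^ 2)⁻¹ * (if a = b then v a * v b else 0)) := by
        intro a
        rw [Finset.mul_sum]
        apply Finset.sum_congr rfl
        intro b _
        rw [hM_apply a b]
        split_ifs with h <;> ring
      calc RCLike.re (∑ a, v a * ∑ b, M a b * v b)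
          = ∑ a, ∑ b, ((n : ℝ)⁻¹ * (v a * v b * gfun m k lam (p a - p b))
            + (lam ^ 2)⁻¹ * (if a = b then v a * v b else 0)) := by
            simp only [RCLike.re_to_real]
            exact Finset.sum_congr rfl fun a _ => hexp a
        _ = (n : ℝ)⁻¹ * (∑ a, ∑ b, v a * v b * gfun m k lam (p a - p b))
            + (lam ^ 2)⁻¹ * ∑ a, (v a) ^ 2 := by
            rw [Finset.mul_sum, Finset.mul_sum, ← Finset.sum_add_distrib]
            apply Finset.sum_congr rfl
            intro a _
            rw [Finset.sum_add_distrib]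
            congr 1
            · rw [Finset.mul_sum]
            · rw [← Finset.mul_sum, Finset.sum_ite_eq Finset.univ a fun b => v a * v b]
              simp [sq]
        _ = (n : ℝ)⁻¹ * (∑ a, ∑ b, v a * v b * gfun m k lam (p a - p b)) + (lam ^ 2)⁻¹ := by
            rw [hsq, mul_one]
    obtain ⟨hq0, hqle⟩ := qf_bounds p hlam hsum v
    constructor
    · rw [hquad]
      have : 0 ≤ (n : ℝ)⁻¹ * (∑ a, ∑ b, v a * v b * gfun m k lam (p a - p b)) :=
        mul_nonneg (by positivity) hq0
      linarith
    · rw [hquad]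
      have hn' : (0:ℝ) < n := by exact_mod_cast hn
      have : (n : ℝ)⁻¹ * (∑ a, ∑ b, v a * v b * gfun m k lam (p a - p b))
          ≤ (n : ℝ)⁻¹ * (S * ((n : ℝ) * ∑ a, (v a) ^ 2)) :=
        mul_le_mul_of_nonneg_left hqle (by positivity)
      rw [hsq, mul_one] at this
      have h2 : (n : ℝ)⁻¹ * (S * (n : ℝ)) = S := by
        field_simp
      linarith [this, h2 ▸ this]
  intro i j
  have hC : (1 + ∑' l : Fin m → ℤ, lam ^ 2 / (1 + lam * ∑ t, ((l t : ℝ)) ^ (2 * k)))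
      = 1 + lam ^ 2 * S := by
    congr 1
    rw [hS_def, ← tsum_mul_left]
    apply tsum_congr
    intro l
    rw [div_eq_mul_inv]
  rw [hC]
  have h1 := (key i).2
  have h2 := (key j).1
  have hconst : (1 + lam ^ 2 * S) * (lam ^ 2)⁻¹ = (lam ^ 2)⁻¹ + S := by
    have hl2 : lam ^ 2 ≠ 0 := by positivity
    field_simp
  calc hM.eigenvalues i ≤ S + (lam ^ 2)⁻¹ := h1
    _ = (1 + lam ^ 2 * S) * (lam ^ 2)⁻¹ := by rw [hconst]; ring
    _ ≤ (1 + lam ^ 2 * S) * hM.eigenvalues j :=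
        mul_le_mul_of_nonneg_left h2 (by positivity)
end
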